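/- For n ≥ 3, the lower rank r2 of the multiplicative semigroup A^+(B_n) equals n + 3; that is, the minimum cardinality of a generating subset of A^+(B_n) is n + 3. -/

import Mathlib

def Bn (n : ℕ) : Type := Option (Fin n × Fin n)

def Bn.mul {n : ℕ} : Bn n → Bn n → Bn n
  | some (i, j), some (k, l) => if j = k then some (i, l) else none
  | _, _ => none

instance (n : ℕ) : Mul (Bn n) := ⟨Bn.mul⟩

instance (n : ℕ) : Semigroup (Bn n) where
  mul_assoc a b c := by
    show Bn.mul (Bn.mul a b) c = Bn.mul a (Bn.mul b c)
    have A : ∀ (c : Prop) [Decidable c] (x : Bn n), c → @ite (Bn n) c _ x none = x :=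
      fun _ _ _ h => if_pos h
    have B : ∀ (c : Prop) [Decidable c] (x : Bn n), ¬c → @ite (Bn n) c _ x none = none :=
      fun _ _ _ h => if_neg h
    rcases a with _ | ⟨i, j⟩ <;> rcases b with _ | ⟨k, l⟩ <;> rcases c with _ | ⟨p, q⟩
    all_goals first | rfl | skip
    · by_cases hjk : j = k
      · exact (congrArg (fun x : Bn n => Bn.mul x none) (A _ (some (i, l)) hjk)).trans rfl
      · exact (congrArg (fun x : Bn n => Bn.mul x none) (B _ (some (i, l)) hjk)).trans rfl
    · by_cases hjk : j = k <;> by_cases hlp : l = p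
      · exact (congrArg (fun x : Bn n => Bn.mul x (some (p, q))) (A _ (some (i, l)) hjk)).trans
          ((A _ (some (i, q)) hlp).trans ((A _ (some (i, q)) hjk).symm.trans
            (congrArg (fun x : Bn n => Bn.mul (some (i, j)) x) (A _ (some (k, q)) hlp).symm)))
      · exact (congrArg (fun x : Bn n => Bn.mul x (some (p, q))) (A _ (some (i, l)) hjk)).trans
          ((B _ (some (i, q)) hlp).trans
            (congrArg (fun x : Bn n => Bn.mul (some (i, j)) x) (B _ (some (k, q)) hlp).symm))
      · exact (congrArg (fun x : Bn n => Bn.mul x (some (p, q))) (B _ (some (i, l)) hjk)).trans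
          ((B _ (some (i, q)) hjk).symm.trans
            (congrArg (fun x : Bn n => Bn.mul (some (i, j)) x) (A _ (some (k, q)) hlp).symm))
      · exact (congrArg (fun x : Bn n => Bn.mul x (some (p, q))) (B _ (some (i, l)) hjk)).trans
            (congrArg (fun x : Bn n => Bn.mul (some (i, j)) x) (B _ (some (k, q)) hlp).symm)

/-- Maps on `Bn n`, composed left-to-right: `x (f * g) = (x f) g`. -/
def MapBn (n : ℕ) : Type := Bn n → Bn n

instance (n : ℕ) : Monoid (MapBn n) where
  mul f g := fun x => g (f x)
  one := fun x => x
  mul_assoc _ _ _ := rfl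
  one_mul _ := rfl
  mul_one _ := rfl

/-- The constant map `ξ_c`. -/
def constMap (n : ℕ) (c : Bn n) : MapBn n := fun _ => c

/-- The `n`-support map `(p, q; σ)`, sending `(i, p) ↦ (iσ, q)` and all else to `θ`. -/
def nSuppMap (n : ℕ) (p q : Fin n) (σ : Equiv.Perm (Fin n)) : MapBn n :=
  fun x =>
    match x with
    | some (i, j) => if j = p then some (σ i, q) else none
    | none => none

instance (n : ℕ) : DecidableEq (Bn n) :=
  inferInstanceAs (DecidableEq (Option (Fin n × Fin n)))

/-- The singleton-support map `((k,l) → (p,q))`. -/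
def sglMap (n : ℕ) (k l p q : Fin n) : MapBn n :=
  fun x => @ite _ (x = some (k, l)) (instDecidableEqBn n x (some (k, l))) (some (p, q)) none

/-- The multiplicative semigroup reduct `A⁺(Bₙ)`, as a set of maps on `Bn n`. -/
def APlus (n : ℕ) : Set (MapBn n) :=
  {f | (∃ c, f = constMap n c) ∨ (∃ p q σ, f = nSuppMap n p q σ) ∨
       (∃ k l p q, f = sglMap n k l p q)}

/-- Independence of a subset of a semigroup. -/
def IndependentIn {S : Type*} [Semigroup S] (U : Set S) : Prop :=
  ∀ a ∈ U, a ∉ Subsemigroup.closure (U \ {a})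


namespace APlusPf
open Equiv Set

@[simp] lemma mul_apply {n : ℕ} (f g : MapBn n) (x : Bn n) : (f * g) x = g (f x) := rfl

@[simp] lemma constMap_apply {n : ℕ} (c : Bn n) (x : Bn n) : constMap n c x = c := rfl

@[simp] lemma nSupp_none {n : ℕ} (p q : Fin n) (σ : Perm (Fin n)) :
    nSuppMap n p q σ none = none := rfl

@[simp] lemma nSupp_some {n : ℕ} (p q : Fin n) (σ : Perm (Fin n)) (i j : Fin n) :
    nSuppMap n p q σ (some (i, j)) = if j = p then some (σ i, q) else none := rfl

@[simp] lemma sgl_apply {n : ℕ} (k l p q : Fin n) (x : Bn n) :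
    sglMap n k l p q x =
      @ite _ (x = some (k, l)) (instDecidableEqBn n x (some (k, l))) (some (p, q)) none := rfl

lemma mul_apply' {n : ℕ} (f g : MapBn n) (x : Option (Fin n × Fin n)) : (f * g) x = g (f x) := rfl

lemma constMap_apply' {n : ℕ} (c : Bn n) (x : Option (Fin n × Fin n)) : constMap n c x = c := rfl

lemma sgl_apply' {n : ℕ} (k l p q : Fin n) (x : Option (Fin n × Fin n)) :
    sglMap n k l p q x =
      @ite _ (x = some (k, l)) (instDecidableEqBn n x (some (k, l))) (some (p, q)) none := rfl

@[simp] lemma bn_some_inj {n : ℕ} {a b : Fin n × Fin n} :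
    @Eq (Bn n) (some a) (some b) ↔ a = b := Option.some_inj

@[simp] lemma bn_some_ne_none {n : ℕ} (a : Fin n × Fin n) :
    @Eq (Bn n) (some a) none ↔ False := by simp [Bn]

@[simp] lemma bn_none_ne_some {n : ℕ} (a : Fin n × Fin n) :
    @Eq (Bn n) none (some a) ↔ False := by simp [Bn]

variable {m : ℕ}

lemma fin01 : (0 : Fin (m+3)) ≠ 1 := by simp [Fin.ext_iff]

lemma const_ne_nSupp (c : Bn (m+3)) (p q : Fin (m+3)) (σ : Perm (Fin (m+3))) :
    constMap (m+3) c ≠ nSuppMap (m+3) p q σ := by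
  intro h
  have h1 := congrFun h none
  have h2 := congrFun h (some (0, p))
  rw [constMap_apply', nSupp_none] at h1
  rw [constMap_apply', nSupp_some, if_pos rfl] at h2
  rw [h1] at h2
  exact nomatch h2

lemma const_ne_sgl (c : Bn (m+3)) (k l p q : Fin (m+3)) :
    constMap (m+3) c ≠ sglMap (m+3) k l p q := by
  intro h
  have h1 := congrFun h none
  have h2 := congrFun h (some (k, l))
  erw [constMap_apply', sgl_apply', if_neg (show ¬ ((none : Bn (m+3)) = some (k, l)) from fun hc => nomatch hc)] at h1
  erw [constMap_apply', sgl_apply', if_pos rfl] at h2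
  rw [h1] at h2
  exact nomatch h2

lemma nSupp_ne_sgl (p q : Fin (m+3)) (σ : Perm (Fin (m+3))) (k l p' q' : Fin (m+3)) :
    nSuppMap (m+3) p q σ ≠ sglMap (m+3) k l p' q' := by
  intro h
  have h1 := congrFun h (some (0, p))
  have h2 := congrFun h (some (1, p))
  rw [nSupp_some, if_pos rfl, sgl_apply'] at h1
  rw [nSupp_some, if_pos rfl, sgl_apply'] at h2
  by_cases hc1 : (some ((0 : Fin (m+3)), p) : Bn (m+3)) = some (k, l)
  · by_cases hc2 : (some ((1 : Fin (m+3)), p) : Bn (m+3)) = some (k, l)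
    · have h3 : ((0 : Fin (m+3)), p) = (1, p) :=
        Option.some_injective _ (hc1.trans hc2.symm)
      exact fin01 (congrArg Prod.fst h3)
    · erw [if_neg hc2] at h2
      exact nomatch h2
  · erw [if_neg hc1] at h1
    exact nomatch h1

lemma nSupp_inj {p q p' q' : Fin (m+3)} {σ σ' : Perm (Fin (m+3))}
    (h : nSuppMap (m+3) p q σ = nSuppMap (m+3) p' q' σ') : p = p' ∧ q = q' ∧ σ = σ' := by
  have hp : p = p' := by
    by_cases hc : p = p'
    · exact hc
    · have h1 := congrFun h (some (0, p))
      rw [nSupp_some, if_pos rfl, nSupp_some, if_neg hc] at h1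
      exact absurd h1 (by exact fun hh => nomatch hh)
  subst hp
  have h1 := congrFun h (some (0, p))
  rw [nSupp_some, if_pos rfl, nSupp_some, if_pos rfl] at h1
  have hq : q = q' := congrArg Prod.snd (Option.some_injective _ h1)
  refine ⟨rfl, hq, ?_⟩
  apply Equiv.ext
  intro i
  have h2 := congrFun h (some (i, p))
  rw [nSupp_some, if_pos rfl, nSupp_some, if_pos rfl] at h2
  have h3 := congrArg Prod.fst (Option.some_injective _ h2)
  exact h3

lemma sgl_inj {k l p q k' l' p' q' : Fin (m+3)}
    (h : sglMap (m+3) k l p q = sglMap (m+3) k' l' p' q') :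
    k = k' ∧ l = l' ∧ p = p' ∧ q = q' := by
  have h1 := congrFun h (some (k, l))
  erw [sgl_apply', if_pos rfl, sgl_apply'] at h1
  by_cases hc : (some (k, l) : Bn (m+3)) = some (k', l')
  · erw [if_pos hc] at h1
    have h2 := Option.some_injective _ hc
    have h3 := Option.some_injective _ h1
    exact ⟨congrArg Prod.fst h2, congrArg Prod.snd h2,
      congrArg Prod.fst h3, congrArg Prod.snd h3⟩
  · erw [if_neg hc] at h1
    exact nomatch h1

lemma const_inj {c c' : Bn (m+3)} (h : constMap (m+3) c = constMap (m+3) c') : c = c' :=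
  congrFun h none

end APlusPf
namespace APlusPf
open Equiv Set

variable {n : ℕ}

lemma const_mul (c : Bn n) (g : MapBn n) : constMap n c * g = constMap n (g c) := rfl

lemma mul_const (f : MapBn n) (c : Bn n) : f * constMap n c = constMap n c := rfl

lemma nSupp_mul_nSupp (p q q' : Fin n) (σ σ' : Perm (Fin n)) :
    nSuppMap n p q σ * nSuppMap n q q' σ' = nSuppMap n p q' (σ' * σ) := by
  funext x
  rcases x with _ | ⟨i, j⟩
  · rfl
  · simp only [mul_apply', nSupp_some]
    split_ifs with h1 <;> simp [Equiv.Perm.mul_apply] <;> exact rfl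

lemma nSupp_mul_nSupp_ne (p q p₂ q₂ : Fin n) (σ σ₂ : Perm (Fin n)) (h : q ≠ p₂) :
    nSuppMap n p q σ * nSuppMap n p₂ q₂ σ₂ = constMap n none := by
  funext x
  rcases x with _ | ⟨i, j⟩
  · rfl
  · simp only [mul_apply', nSupp_some, constMap_apply']
    split_ifs with h1 <;> simp [h] <;> exact rfl

lemma nSupp_mul_sgl (p k l p' q' : Fin n) (σ : Perm (Fin n)) :
    nSuppMap n p l σ * sglMap n k l p' q' = sglMap n (σ⁻¹ k) p p' q' := by
  funext x
  rcases x with _ | ⟨i, j⟩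
  · rfl
  · simp only [mul_apply', nSupp_some, sgl_apply']
    by_cases hj : j = p
    · subst hj
      rw [if_pos rfl]
      by_cases hik : i = σ⁻¹ k
      · subst hik
        erw [if_pos (by rw [Equiv.Perm.coe_inv, Equiv.apply_symm_apply]), if_pos rfl]
      · erw [if_neg, if_neg]
        · intro hc
          exact hik (Prod.ext_iff.mp (Option.some_injective _ hc)).1
        · intro hc
          have h5 : σ i = k := (Prod.ext_iff.mp (Option.some_injective _ hc)).1
          exact hik (by rw [← h5, Equiv.Perm.coe_inv, Equiv.symm_apply_apply])
    · erw [if_neg hj, if_neg, if_neg]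
      · intro hc
        exact hj (Prod.ext_iff.mp (Option.some_injective _ hc)).2
      · exact fun hc => nomatch hc

lemma nSupp_mul_sgl_ne (p q k l p' q' : Fin n) (σ : Perm (Fin n)) (h : q ≠ l) :
    nSuppMap n p q σ * sglMap n k l p' q' = constMap n none := by
  funext x
  rcases x with _ | ⟨i, j⟩
  · rfl
  · simp only [mul_apply', nSupp_some, sgl_apply', constMap_apply']
    by_cases h1 : j = p <;> simp [h1, h, Prod.ext_iff] <;> exact rfl

lemma sgl_mul_nSupp (k l p q q₂ : Fin n) (σ : Perm (Fin n)) :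
    sglMap n k l p q * nSuppMap n q q₂ σ = sglMap n k l (σ p) q₂ := by
  funext x
  simp only [mul_apply, sgl_apply]
  by_cases hx : x = some (k, l) <;> simp [hx, sgl_apply'] <;> rfl

lemma sgl_mul_nSupp_ne (k l p q p₂ q₂ : Fin n) (σ : Perm (Fin n)) (h : q ≠ p₂) :
    sglMap n k l p q * nSuppMap n p₂ q₂ σ = constMap n none := by
  funext x
  simp only [mul_apply, sgl_apply, constMap_apply]
  by_cases hx : x = some (k, l)
  · rw [if_pos hx, nSupp_some, if_neg h]; rfl
  · rw [if_neg hx, nSupp_none]; rfl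

lemma sgl_mul_sgl (k l p q p₂ q₂ : Fin n) :
    sglMap n k l p q * sglMap n p q p₂ q₂ = sglMap n k l p₂ q₂ := by
  funext x
  simp only [mul_apply, sgl_apply]
  by_cases hx : x = some (k, l) <;> simp [hx, sgl_apply'] <;> rfl

lemma sgl_mul_sgl_ne (k l p q k₂ l₂ p₂ q₂ : Fin n) (h : (p, q) ≠ (k₂, l₂)) :
    sglMap n k l p q * sglMap n k₂ l₂ p₂ q₂ = constMap n none := by
  funext x
  simp only [mul_apply, sgl_apply, constMap_apply]
  by_cases hx : x = some (k, l) <;> simp [hx, h, Prod.ext_iff, sgl_apply'] <;> rfl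

lemma const_mem (c : Bn n) : constMap n c ∈ APlus n := Or.inl ⟨c, rfl⟩

lemma nSupp_mem (p q : Fin n) (σ : Perm (Fin n)) : nSuppMap n p q σ ∈ APlus n :=
  Or.inr (Or.inl ⟨p, q, σ, rfl⟩)

lemma sgl_mem (k l p q : Fin n) : sglMap n k l p q ∈ APlus n :=
  Or.inr (Or.inr ⟨k, l, p, q, rfl⟩)

lemma APlus_mul_mem {f g : MapBn n} (hf : f ∈ APlus n) (hg : g ∈ APlus n) :
    f * g ∈ APlus n := by
  rcases hf with ⟨c, rfl⟩ | ⟨p, q, σ, rfl⟩ | ⟨k, l, p, q, rfl⟩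
  · rw [const_mul]; exact const_mem _
  · rcases hg with ⟨c₂, rfl⟩ | ⟨p₂, q₂, σ₂, rfl⟩ | ⟨k₂, l₂, p₂, q₂, rfl⟩
    · rw [mul_const]; exact const_mem _
    · by_cases h : q = p₂
      · subst h; rw [nSupp_mul_nSupp]; exact nSupp_mem _ _ _
      · rw [nSupp_mul_nSupp_ne _ _ _ _ _ _ h]; exact const_mem _
    · by_cases h : q = l₂
      · subst h; rw [nSupp_mul_sgl]; exact sgl_mem _ _ _ _
      · rw [nSupp_mul_sgl_ne _ _ _ _ _ _ _ h]; exact const_mem _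
  · rcases hg with ⟨c₂, rfl⟩ | ⟨p₂, q₂, σ₂, rfl⟩ | ⟨k₂, l₂, p₂, q₂, rfl⟩
    · rw [mul_const]; exact const_mem _
    · by_cases h : q = p₂
      · subst h; rw [sgl_mul_nSupp]; exact sgl_mem _ _ _ _
      · rw [sgl_mul_nSupp_ne _ _ _ _ _ _ _ h]; exact const_mem _
    · by_cases h : (p, q) = (k₂, l₂)
      · obtain ⟨h1, h2⟩ := Prod.ext_iff.mp h
        subst h1; subst h2
        rw [sgl_mul_sgl]; exact sgl_mem _ _ _ _
      · rw [sgl_mul_sgl_ne _ _ _ _ _ _ _ _ h]; exact const_mem _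

def APlusSub (n : ℕ) : Subsemigroup (MapBn n) where
  carrier := APlus n
  mul_mem' := APlus_mul_mem

lemma closure_subset_APlus {U : Set (MapBn n)} (hU : U ⊆ APlus n) :
    (Subsemigroup.closure U : Set (MapBn n)) ⊆ APlus n :=
  (Subsemigroup.closure_le (S := APlusSub n)).mpr hU

end APlusPf
namespace APlusPf
open Equiv Set

variable {m : ℕ}

lemma mul_eq_nSupp {f g : MapBn (m+3)} (hf : f ∈ APlus (m+3)) (hg : g ∈ APlus (m+3))
    {p q : Fin (m+3)} {σ : Perm (Fin (m+3))} (h : f * g = nSuppMap (m+3) p q σ) :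
    ∃ q₁ σ₁ σ₂, f = nSuppMap (m+3) p q₁ σ₁ ∧ g = nSuppMap (m+3) q₁ q σ₂ ∧ σ = σ₂ * σ₁ := by
  rcases hf with ⟨c, rfl⟩ | ⟨p₁, q₁, σ₁, rfl⟩ | ⟨k₁, l₁, p₁, q₁, rfl⟩
  · rw [const_mul] at h
    exact absurd h (const_ne_nSupp _ _ _ _)
  · rcases hg with ⟨c₂, rfl⟩ | ⟨p₂, q₂, σ₂, rfl⟩ | ⟨k₂, l₂, p₂, q₂, rfl⟩
    · rw [mul_const] at h
      exact absurd h (const_ne_nSupp _ _ _ _)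
    · by_cases hc : q₁ = p₂
      · subst hc
        rw [nSupp_mul_nSupp] at h
        obtain ⟨h1, h2, h3⟩ := nSupp_inj h
        subst h1; subst h2
        exact ⟨q₁, σ₁, σ₂, rfl, rfl, h3.symm⟩
      · rw [nSupp_mul_nSupp_ne _ _ _ _ _ _ hc] at h
        exact absurd h (const_ne_nSupp _ _ _ _)
    · by_cases hc : q₁ = l₂
      · subst hc
        rw [nSupp_mul_sgl] at h
        exact absurd h.symm (nSupp_ne_sgl _ _ _ _ _ _ _)
      · rw [nSupp_mul_sgl_ne _ _ _ _ _ _ _ hc] at h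
        exact absurd h (const_ne_nSupp _ _ _ _)
  · rcases hg with ⟨c₂, rfl⟩ | ⟨p₂, q₂, σ₂, rfl⟩ | ⟨k₂, l₂, p₂, q₂, rfl⟩
    · rw [mul_const] at h
      exact absurd h (const_ne_nSupp _ _ _ _)
    · by_cases hc : q₁ = p₂
      · subst hc
        rw [sgl_mul_nSupp] at h
        exact absurd h.symm (nSupp_ne_sgl _ _ _ _ _ _ _)
      · rw [sgl_mul_nSupp_ne _ _ _ _ _ _ _ hc] at h
        exact absurd h (const_ne_nSupp _ _ _ _)
    · by_cases hc : (p₁, q₁) = (k₂, l₂)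
      · obtain ⟨h1, h2⟩ := Prod.ext_iff.mp hc
        subst h1; subst h2
        rw [sgl_mul_sgl] at h
        exact absurd h.symm (nSupp_ne_sgl _ _ _ _ _ _ _)
      · rw [sgl_mul_sgl_ne _ _ _ _ _ _ _ _ hc] at h
        exact absurd h (const_ne_nSupp _ _ _ _)

lemma mul_eq_sgl {f g : MapBn (m+3)} (hf : f ∈ APlus (m+3)) (hg : g ∈ APlus (m+3))
    {k l p q : Fin (m+3)} (h : f * g = sglMap (m+3) k l p q) :
    (∃ a b c d, f = sglMap (m+3) a b c d) ∨ (∃ a b c d, g = sglMap (m+3) a b c d) := by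
  rcases hf with ⟨c, rfl⟩ | ⟨p₁, q₁, σ₁, rfl⟩ | ⟨k₁, l₁, p₁, q₁, rfl⟩
  · rw [const_mul] at h
    exact absurd h (const_ne_sgl _ _ _ _ _)
  · rcases hg with ⟨c₂, rfl⟩ | ⟨p₂, q₂, σ₂, rfl⟩ | ⟨k₂, l₂, p₂, q₂, rfl⟩
    · rw [mul_const] at h
      exact absurd h (const_ne_sgl _ _ _ _ _)
    · by_cases hc : q₁ = p₂
      · subst hc
        rw [nSupp_mul_nSupp] at h
        exact absurd h (nSupp_ne_sgl _ _ _ _ _ _ _)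
      · rw [nSupp_mul_nSupp_ne _ _ _ _ _ _ hc] at h
        exact absurd h (const_ne_sgl _ _ _ _ _)
    · exact Or.inr ⟨_, _, _, _, rfl⟩
  · exact Or.inl ⟨_, _, _, _, rfl⟩

lemma mul_eq_const_some {f g : MapBn (m+3)} (hf : f ∈ APlus (m+3)) (hg : g ∈ APlus (m+3))
    {c : Fin (m+3) × Fin (m+3)} (h : f * g = constMap (m+3) (some c)) :
    (∃ c', f = constMap (m+3) (some c')) ∨ (∃ c', g = constMap (m+3) (some c')) := by
  rcases hg with ⟨c₂, rfl⟩ | ⟨p₂, q₂, σ₂, rfl⟩ | ⟨k₂, l₂, p₂, q₂, rfl⟩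
  · rw [mul_const] at h
    have := const_inj h
    subst this
    exact Or.inr ⟨c, rfl⟩
  · rcases hf with ⟨c₁, rfl⟩ | ⟨p₁, q₁, σ₁, rfl⟩ | ⟨k₁, l₁, p₁, q₁, rfl⟩
    · rw [const_mul] at h
      have hc1 := const_inj h
      rcases c₁ with _ | d
      · rw [nSupp_none] at hc1
        exact absurd hc1 (by simp)
      · exact Or.inl ⟨d, rfl⟩
    · by_cases hc : q₁ = p₂
      · subst hc
        rw [nSupp_mul_nSupp] at h
        exact absurd h.symm (const_ne_nSupp _ _ _ _)
      · rw [nSupp_mul_nSupp_ne _ _ _ _ _ _ hc] at h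
        have := const_inj h
        exact absurd this (by simp)
    · by_cases hc : q₁ = p₂
      · subst hc
        rw [sgl_mul_nSupp] at h
        exact absurd h.symm (const_ne_sgl _ _ _ _ _)
      · rw [sgl_mul_nSupp_ne _ _ _ _ _ _ _ hc] at h
        have := const_inj h
        exact absurd this (by simp)
  · rcases hf with ⟨c₁, rfl⟩ | ⟨p₁, q₁, σ₁, rfl⟩ | ⟨k₁, l₁, p₁, q₁, rfl⟩
    · rw [const_mul] at h
      have hc1 := const_inj h
      rcases c₁ with _ | d
      · erw [sgl_apply', if_neg (show ¬ ((none : Bn (m+3)) = some (k₂, l₂)) from fun hc => nomatch hc)] at hc1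
        exact absurd hc1 (by simp)
      · exact Or.inl ⟨d, rfl⟩
    · by_cases hc : q₁ = l₂
      · subst hc
        rw [nSupp_mul_sgl] at h
        exact absurd h.symm (const_ne_sgl _ _ _ _ _)
      · rw [nSupp_mul_sgl_ne _ _ _ _ _ _ _ hc] at h
        have := const_inj h
        exact absurd this (by simp)
    · by_cases hc : (p₁, q₁) = (k₂, l₂)
      · obtain ⟨h1, h2⟩ := Prod.ext_iff.mp hc
        subst h1; subst h2
        rw [sgl_mul_sgl] at h
        exact absurd h.symm (const_ne_sgl _ _ _ _ _)
      · rw [sgl_mul_sgl_ne _ _ _ _ _ _ _ _ hc] at h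
        have := const_inj h
        exact absurd this (by simp)

end APlusPf
namespace APlusPf
open Equiv Set

variable {m : ℕ}

lemma closure_ind {U : Set (MapBn (m+3))} (hU : U ⊆ APlus (m+3))
    {P : MapBn (m+3) → Prop}
    (hmem : ∀ f ∈ U, P f)
    (hmul : ∀ x y, x ∈ APlus (m+3) → y ∈ APlus (m+3) → P x → P y → P (x * y)) :
    ∀ f ∈ Subsemigroup.closure U, P f := by
  intro f hf
  induction hf using Subsemigroup.closure_induction with
  | mem x hx => exact hmem x hx
  | mul x y hx hy px py =>
      exact hmul x y (closure_subset_APlus hU hx) (closure_subset_APlus hU hy) px py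

lemma mem_closure_of_eq {U : Set (MapBn (m+3))}
    (hcl : (Subsemigroup.closure U : Set (MapBn (m+3))) = APlus (m+3))
    {f : MapBn (m+3)} (hf : f ∈ APlus (m+3)) : f ∈ Subsemigroup.closure U := by
  rw [← hcl] at hf
  exact hf

lemma exists_const_gen {U : Set (MapBn (m+3))} (hU : U ⊆ APlus (m+3))
    (hcl : (Subsemigroup.closure U : Set (MapBn (m+3))) = APlus (m+3)) :
    ∃ f ∈ U, ∃ c, f = constMap (m+3) (some c) := by
  have key := closure_ind hU (P := fun f => (∃ c, f = constMap (m+3) (some c)) →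
      ∃ g ∈ U, ∃ c', g = constMap (m+3) (some c'))
    (fun f hf hex => ⟨f, hf, hex⟩)
    (by
      rintro x y hx hy px py ⟨c, hc⟩
      rcases mul_eq_const_some hx hy hc with h | h
      · exact px h
      · exact py h)
  exact key _ (mem_closure_of_eq hcl (const_mem _)) ⟨(0, 0), rfl⟩

lemma exists_sgl_gen {U : Set (MapBn (m+3))} (hU : U ⊆ APlus (m+3))
    (hcl : (Subsemigroup.closure U : Set (MapBn (m+3))) = APlus (m+3)) :
    ∃ f ∈ U, ∃ a b c d, f = sglMap (m+3) a b c d := by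
  have key := closure_ind hU (P := fun f => (∃ a b c d, f = sglMap (m+3) a b c d) →
      ∃ g ∈ U, ∃ a b c d, g = sglMap (m+3) a b c d)
    (fun f hf hex => ⟨f, hf, hex⟩)
    (by
      rintro x y hx hy px py ⟨a, b, c, d, hc⟩
      rcases mul_eq_sgl hx hy hc with h | h
      · exact px h
      · exact py h)
  exact key _ (mem_closure_of_eq hcl (sgl_mem 0 0 0 0)) ⟨0, 0, 0, 0, rfl⟩

lemma exists_nSupp_src {U : Set (MapBn (m+3))} (hU : U ⊆ APlus (m+3))
    (hcl : (Subsemigroup.closure U : Set (MapBn (m+3))) = APlus (m+3)) (p : Fin (m+3)) :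
    ∃ f ∈ U, ∃ q σ, f = nSuppMap (m+3) p q σ := by
  have key := closure_ind hU (P := fun f => ∀ p q σ, f = nSuppMap (m+3) p q σ →
      ∃ g ∈ U, ∃ q' σ', g = nSuppMap (m+3) p q' σ')
    (fun f hf p q σ hform => ⟨f, hf, q, σ, hform⟩)
    (by
      intro x y hx hy px py p q σ h
      obtain ⟨q₁, σ₁, σ₂, hx1, hy1, -⟩ := mul_eq_nSupp hx hy h
      exact px p q₁ σ₁ hx1)
  exact key _ (mem_closure_of_eq hcl (nSupp_mem p 0 1)) p 0 1 rfl

/-- Word of labels along the deterministic chain. -/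
def W (τ : Fin (m+3) → Fin (m+3)) (sf : Fin (m+3) → Perm (Fin (m+3)))
    (p : Fin (m+3)) : ℕ → Perm (Fin (m+3))
  | 0 => 1
  | (k+1) => sf (τ^[k] p) * W τ sf p k

lemma W_add (τ : Fin (m+3) → Fin (m+3)) (sf : Fin (m+3) → Perm (Fin (m+3)))
    (p : Fin (m+3)) (a b : ℕ) :
    W τ sf p (a + b) = W τ sf (τ^[a] p) b * W τ sf p a := by
  induction b with
  | zero => simp [W]
  | succ b ih =>
      show sf (τ^[a + b] p) * W τ sf p (a + b) =
        (sf (τ^[b] (τ^[a] p)) * W τ sf (τ^[a] p) b) * W τ sf p a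
      rw [ih, ← Function.iterate_add_apply, Nat.add_comm b a, mul_assoc]

lemma chain_lemma {U : Set (MapBn (m+3))} (hU : U ⊆ APlus (m+3))
    {τ : Fin (m+3) → Fin (m+3)} {sf : Fin (m+3) → Perm (Fin (m+3))}
    (hform : ∀ f ∈ U, ∀ p q σ, f = nSuppMap (m+3) p q σ → q = τ p ∧ σ = sf p) :
    ∀ f ∈ Subsemigroup.closure U, ∀ p q σ, f = nSuppMap (m+3) p q σ →
      ∃ k, 0 < k ∧ q = τ^[k] p ∧ σ = W τ sf p k := by
  refine closure_ind hU (P := fun f => ∀ p q σ, f = nSuppMap (m+3) p q σ →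
      ∃ k, 0 < k ∧ q = τ^[k] p ∧ σ = W τ sf p k) ?_ ?_
  · intro f hf p q σ h
    obtain ⟨h1, h2⟩ := hform f hf p q σ h
    refine ⟨1, Nat.one_pos, ?_, ?_⟩
    · simpa using h1
    · show σ = sf (τ^[0] p) * W τ sf p 0
      simp [W, h2]
  · intro x y hx hy px py p q σ h
    obtain ⟨q₁, σ₁, σ₂, hx1, hy1, hσ⟩ := mul_eq_nSupp hx hy h
    obtain ⟨k₁, hk₁, hq₁, hσ₁⟩ := px p q₁ σ₁ hx1
    obtain ⟨k₂, hk₂, hq₂, hσ₂⟩ := py q₁ q σ₂ hy1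
    refine ⟨k₁ + k₂, by omega, ?_, ?_⟩
    · rw [hq₂, hq₁, ← Function.iterate_add_apply τ k₂ k₁ p, Nat.add_comm k₂ k₁]
    · rw [W_add, ← hq₁, ← hσ₁, ← hσ₂, hσ]

lemma no_n_generators {U : Set (MapBn (m+3))} (hU : U ⊆ APlus (m+3))
    (hcl : (Subsemigroup.closure U : Set (MapBn (m+3))) = APlus (m+3))
    (τ : Fin (m+3) → Fin (m+3)) (sf : Fin (m+3) → Perm (Fin (m+3)))
    (hform : ∀ f ∈ U, ∀ p q σ, f = nSuppMap (m+3) p q σ → q = τ p ∧ σ = sf p) :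
    False := by
  have hσ : ∀ σ : Perm (Fin (m+3)), ∃ k, 0 < k ∧ (0 : Fin (m+3)) = τ^[k] 0 ∧ σ = W τ sf 0 k := by
    intro σ
    exact chain_lemma hU hform _ (mem_closure_of_eq hcl (nSupp_mem 0 0 σ)) 0 0 σ rfl
  have hcomm : ∀ σ σ' : Perm (Fin (m+3)), σ * σ' = σ' * σ := by
    intro σ σ'
    obtain ⟨k, -, hk0, hσk⟩ := hσ σ
    obtain ⟨k', -, hk0', hσk'⟩ := hσ σ'
    have h1 : W τ sf 0 (k + k') = σ' * σ := by
      rw [W_add, ← hk0, ← hσk, ← hσk']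
    have h2 : W τ sf 0 (k' + k) = σ * σ' := by
      rw [W_add, ← hk0', ← hσk, ← hσk']
    rw [← h1, ← h2]
    exact congrArg (W τ sf 0) (Nat.add_comm k' k)
  have h01 : (0 : Fin (m+3)) ≠ 1 := by simp [Fin.ext_iff]
  have h12 : (1 : Fin (m+3)) ≠ 2 := by rw [Ne, Fin.ext_iff, Fin.val_one, Fin.val_two]; omega
  have h02 : (0 : Fin (m+3)) ≠ 2 := by rw [Ne, Fin.ext_iff, Fin.val_zero, Fin.val_two]; omega
  have := hcomm (Equiv.swap 0 1) (Equiv.swap 1 2)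
  have h2 := congrArg (fun π : Perm (Fin (m+3)) => π 2) this
  simp only [Equiv.Perm.mul_apply] at h2
  rw [Equiv.swap_apply_right, Equiv.swap_apply_of_ne_of_ne h02.symm h12.symm,
    Equiv.swap_apply_right] at h2
  exact h01 h2

end APlusPf
namespace APlusPf
open Equiv Set

instance (n : ℕ) : Finite (Bn n) := inferInstanceAs (Finite (Option (Fin n × Fin n)))
instance (n : ℕ) : Finite (MapBn n) := inferInstanceAs (Finite (Bn n → Bn n))

variable {m : ℕ}

lemma lower_bound {U : Set (MapBn (m+3))} (hU : U ⊆ APlus (m+3))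
    (hcl : (Subsemigroup.closure U : Set (MapBn (m+3))) = APlus (m+3)) :
    m + 6 ≤ U.ncard := by
  classical
  set C := {f ∈ U | ∃ c, f = constMap (m+3) (some c)} with hC
  set S := {f ∈ U | ∃ a b c d, f = sglMap (m+3) a b c d} with hS
  set Nn := {f ∈ U | ∃ p q σ, f = nSuppMap (m+3) p q σ} with hN
  have hCU : C ⊆ U := fun f hf => hf.1
  have hSU : S ⊆ U := fun f hf => hf.1
  have hNU : Nn ⊆ U := fun f hf => hf.1
  have hdCS : Disjoint C S := by
    rw [Set.disjoint_left]
    rintro f ⟨-, c, rfl⟩ ⟨-, a, b, c', d, hf2⟩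
    exact const_ne_sgl _ _ _ _ _ hf2
  have hdCN : Disjoint C Nn := by
    rw [Set.disjoint_left]
    rintro f ⟨-, c, rfl⟩ ⟨-, p, q, σ, hf2⟩
    exact const_ne_nSupp _ _ _ _ hf2
  have hdSN : Disjoint S Nn := by
    rw [Set.disjoint_left]
    rintro f ⟨-, a, b, c, d, rfl⟩ ⟨-, p, q, σ, hf2⟩
    exact nSupp_ne_sgl _ _ _ _ _ _ _ hf2.symm
  -- C is nonempty
  have hCne : 1 ≤ C.ncard := by
    obtain ⟨f, hf, c, hfc⟩ := exists_const_gen hU hcl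
    have : f ∈ C := ⟨hf, c, hfc⟩
    have := Set.ncard_pos (C.toFinite) |>.mpr ⟨f, this⟩
    omega
  have hSne : 1 ≤ S.ncard := by
    obtain ⟨f, hf, a, b, c, d, hfc⟩ := exists_sgl_gen hU hcl
    have : f ∈ S := ⟨hf, a, b, c, d, hfc⟩
    have := Set.ncard_pos (S.toFinite) |>.mpr ⟨f, this⟩
    omega
  -- Nn has at least m+4 elements
  have hsrc := exists_nSupp_src hU hcl
  choose g hg qf σf hform using hsrc
  have ginj : Function.Injective g := by
    intro p p' hpp
    rw [hform p, hform p'] at hpp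
    exact (nSupp_inj hpp).1
  have hrange : Set.range g ⊆ Nn := by
    rintro f ⟨p, rfl⟩
    exact ⟨hg p, p, qf p, σf p, hform p⟩
  have hrancard : (Set.range g).ncard = m + 3 := by
    rw [← Set.image_univ, Set.ncard_image_of_injective _ ginj, Set.ncard_univ,
      Nat.card_eq_fintype_card, Fintype.card_fin]
  have hNge : m + 3 ≤ Nn.ncard := by
    have h2 := Set.ncard_le_ncard hrange Nn.toFinite
    omega
  have hNge4 : m + 4 ≤ Nn.ncard := by
    rcases Nat.lt_or_ge Nn.ncard (m+4) with hlt | hge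
    · exfalso
      have heq : Set.range g = Nn :=
        Set.eq_of_subset_of_ncard_le hrange (by omega) Nn.toFinite
      apply no_n_generators hU hcl qf σf
      intro f hf p q σ hfform
      have hfN : f ∈ Nn := ⟨hf, p, q, σ, hfform⟩
      rw [← heq] at hfN
      obtain ⟨p₀, rfl⟩ := hfN
      rw [hform p₀] at hfform
      obtain ⟨h1, h2, h3⟩ := nSupp_inj hfform
      subst h1
      exact ⟨h2.symm, h3.symm⟩
    · exact hge
  have hsub : C ∪ S ∪ Nn ⊆ U := by
    intro f hf
    rcases hf with (hf | hf) | hf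
    · exact hCU hf
    · exact hSU hf
    · exact hNU hf
  have hcard : (C ∪ S ∪ Nn).ncard = C.ncard + S.ncard + Nn.ncard := by
    rw [Set.ncard_union_eq (by
        rw [Set.disjoint_union_left]
        exact ⟨hdCN, hdSN⟩) ((C.toFinite).union (S.toFinite)) Nn.toFinite,
      Set.ncard_union_eq hdCS C.toFinite S.toFinite]
  have := Set.ncard_le_ncard hsub U.toFinite
  omega

end APlusPf
namespace APlusPf
open Equiv Set

variable {m : ℕ}

/-- Powers of a member of a subsemigroup stay in it. -/
lemma pow_mem_subsemigroup {G : Type*} [Monoid G] (K : Subsemigroup G) {x : G} (hx : x ∈ K) :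
    ∀ k, 0 < k → x ^ k ∈ K := by
  intro k
  induction k with
  | zero => intro h; omega
  | succ k ih =>
      intro _
      rcases Nat.eq_zero_or_pos k with h | h
      · subst h
        rw [pow_one]
        exact hx
      · rw [pow_succ]
        exact K.mul_mem (ih h) hx

/-- In a finite group, a nonempty subsemigroup is closed under one and inverses. -/
lemma one_mem_subsemigroup {G : Type*} [Group G] [Finite G] (K : Subsemigroup G) {x : G}
    (hx : x ∈ K) : (1 : G) ∈ K := by
  have h1 := pow_mem_subsemigroup K hx (orderOf x) (orderOf_pos x)
  rwa [pow_orderOf_eq_one x] at h1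

lemma inv_mem_subsemigroup {G : Type*} [Group G] [Finite G] (K : Subsemigroup G) {x : G}
    (hx : x ∈ K) : x⁻¹ ∈ K := by
  rcases Nat.lt_or_ge (orderOf x) 2 with h | h
  · have h1 : orderOf x = 1 := by
      have := orderOf_pos x
      omega
    have h2 : x = 1 := orderOf_eq_one_iff.mp h1
    rw [h2, inv_one]
    rw [h2] at hx
    exact hx
  · have h1 := pow_mem_subsemigroup K hx (orderOf x - 1) (by omega)
    have h2 : x ^ (orderOf x - 1) = x⁻¹ := by
      rw [← mul_right_cancel_iff (a := x), inv_mul_cancel, ← pow_succ]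
      have h3 : orderOf x - 1 + 1 = orderOf x := by omega
      rw [h3, pow_orderOf_eq_one]
    rwa [h2] at h1

/-- The subgroup generated by a set contained in a subsemigroup is inside it. -/
lemma subgroup_closure_subset_subsemigroup {G : Type*} [Group G] [Finite G]
    (K : Subsemigroup G) (s : Set G) (hs : s ⊆ K) (hne : s.Nonempty) :
    (Subgroup.closure s : Set G) ⊆ K := by
  obtain ⟨x₀, hx₀⟩ := hne
  let K' : Subgroup G :=
    { carrier := K
      mul_mem' := fun ha hb => K.mul_mem ha hb
      one_mem' := one_mem_subsemigroup K (hs hx₀)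
      inv_mem' := fun ha => inv_mem_subsemigroup K ha }
  exact (Subgroup.closure_le K').mpr hs

/-! ### The explicit generating set -/

def cyc (m : ℕ) : Perm (Fin (m+3)) := finRotate (m+3)

def agen (m : ℕ) (i : Fin (m+3)) : MapBn (m+3) :=
  nSuppMap (m+3) i (i + 1) (if (i : ℕ) = m + 2 then cyc m else 1)

def genU (m : ℕ) : Set (MapBn (m+3)) :=
  insert (constMap (m+3) (some (0, 0)))
    (insert (sglMap (m+3) 0 0 0 0)
      (insert (nSuppMap (m+3) 0 0 (Equiv.swap 0 1)) (Set.range (agen m))))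

lemma genU_subset : genU m ⊆ APlus (m+3) := by
  rintro f (rfl | rfl | rfl | ⟨i, rfl⟩)
  · exact const_mem _
  · exact sgl_mem _ _ _ _
  · exact nSupp_mem _ _ _
  · exact nSupp_mem _ _ _

lemma fin_add_one {j : ℕ} (hj : j + 1 < m + 3) (hj' : j < m + 3) :
    (⟨j, hj'⟩ : Fin (m+3)) + 1 = ⟨j + 1, hj⟩ := by
  apply Fin.ext
  rw [Fin.val_add]
  show (j + (1 : Fin (m+3)).val) % (m+3) = j + 1
  rw [Fin.val_one]
  exact Nat.mod_eq_of_lt hj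

lemma c0_mem_genU : constMap (m+3) (some (0, 0)) ∈ genU m := Set.mem_insert _ _

lemma s0_mem_genU : sglMap (m+3) 0 0 0 0 ∈ genU m :=
  Set.mem_insert_of_mem _ (Set.mem_insert _ _)

lemma b_mem_genU : nSuppMap (m+3) 0 0 (Equiv.swap 0 1) ∈ genU m :=
  Set.mem_insert_of_mem _ (Set.mem_insert_of_mem _ (Set.mem_insert _ _))

lemma agen_mem_genU (i : Fin (m+3)) : agen m i ∈ genU m :=
  Set.mem_insert_of_mem _ (Set.mem_insert_of_mem _ (Set.mem_insert_of_mem _ ⟨i, rfl⟩))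

lemma agen_lt {j : ℕ} (hj : j < m + 2) :
    agen m ⟨j, by omega⟩ = nSuppMap (m+3) ⟨j, by omega⟩ ⟨j + 1, by omega⟩ 1 := by
  unfold agen
  rw [if_neg (by simpa using Nat.ne_of_lt hj), fin_add_one (by omega)]

lemma fin_last_add_one : (⟨m + 2, by omega⟩ : Fin (m+3)) + 1 = 0 := by
  apply Fin.ext
  rw [Fin.val_add]
  show (m + 2 + (1 : Fin (m+3)).val) % (m+3) = (0 : Fin (m+3)).val
  rw [Fin.val_one, Fin.val_zero]
  simp [Nat.mod_self]

lemma agen_last : agen m ⟨m + 2, by omega⟩ = nSuppMap (m+3) ⟨m + 2, by omega⟩ 0 (cyc m) := by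
  unfold agen
  rw [if_pos (by simp), fin_last_add_one]

lemma chain_mem : ∀ k (hk : k ≤ m + 2) j (hj : j < k),
    nSuppMap (m+3) ⟨j, by omega⟩ ⟨k, by omega⟩ 1 ∈ Subsemigroup.closure (genU m) := by
  intro k
  induction k with
  | zero => intro _ j hj; omega
  | succ k ih =>
      intro hk j hj
      have hmem_a : agen m ⟨k, by omega⟩ ∈ Subsemigroup.closure (genU m) :=
        Subsemigroup.subset_closure (agen_mem_genU _)
      have ha := agen_lt (m := m) (j := k) (by omega)
      rw [ha] at hmem_a
      rcases Nat.eq_or_lt_of_le (Nat.succ_le_of_lt hj) with h | h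
      · have hjk : j = k := by omega
        subst hjk
        exact hmem_a
      · have h1 := ih (by omega) j (by omega)
        have h2 := Subsemigroup.mul_mem _ h1 hmem_a
        rw [nSupp_mul_nSupp, one_mul (1 : Perm (Fin (m+3)))] at h2
        exact h2

lemma zero_mk : (⟨0, by omega⟩ : Fin (m+3)) = 0 := rfl

lemma loop_mem : nSuppMap (m+3) 0 0 (cyc m) ∈ Subsemigroup.closure (genU m) := by
  have h1 := chain_mem (m := m) (m + 2) le_rfl 0 (by omega)
  have h2 : agen m ⟨m + 2, by omega⟩ ∈ Subsemigroup.closure (genU m) :=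
    Subsemigroup.subset_closure (agen_mem_genU _)
  rw [agen_last] at h2
  have h3 := Subsemigroup.mul_mem _ h1 h2
  rw [nSupp_mul_nSupp, mul_one (cyc m), zero_mk] at h3
  exact h3

lemma nSupp00_mem (σ : Perm (Fin (m+3))) :
    nSuppMap (m+3) 0 0 σ ∈ Subsemigroup.closure (genU m) := by
  let K : Subsemigroup (Perm (Fin (m+3))) :=
    { carrier := {σ | nSuppMap (m+3) 0 0 σ ∈ Subsemigroup.closure (genU m)}
      mul_mem' := by
        intro a b ha hb
        have ha' : nSuppMap (m+3) 0 0 a ∈ Subsemigroup.closure (genU m) := ha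
        have hb' : nSuppMap (m+3) 0 0 b ∈ Subsemigroup.closure (genU m) := hb
        have h := Subsemigroup.mul_mem (Subsemigroup.closure (genU m)) hb' ha'
        rwa [nSupp_mul_nSupp] at h }
  have hc : cyc m ∈ K := loop_mem
  have hs : Equiv.swap 0 1 ∈ K := Subsemigroup.subset_closure b_mem_genU
  have hcycle : Subgroup.closure ({cyc m, Equiv.swap 0 1} : Set (Perm (Fin (m+3)))) = ⊤ := by
    have h1 : (cyc m).IsCycle := isCycle_finRotate (n := m+1)
    have h2 : (cyc m).support = Finset.univ := support_finRotate (n := m+1)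
    have h3 := Equiv.Perm.closure_cycle_adjacent_swap h1 h2 0
    have h4 : cyc m 0 = 1 := by
      show finRotate (m+3) 0 = 1
      rw [finRotate_succ_apply, zero_add]
    rwa [h4] at h3
  have h5 : σ ∈ Subgroup.closure ({cyc m, Equiv.swap 0 1} : Set (Perm (Fin (m+3)))) := by
    rw [hcycle]
    trivial
  refine subgroup_closure_subset_subsemigroup K _ ?_ ⟨cyc m, Set.mem_insert _ _⟩ h5
  rintro x (rfl | rfl)
  · exact hc
  · exact hs

lemma to0_mem (p : Fin (m+3)) :
    nSuppMap (m+3) p 0 (cyc m) ∈ Subsemigroup.closure (genU m) := by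
  rcases p with ⟨j, hj⟩
  rcases Nat.lt_or_ge j (m+2) with h | h
  · rcases Nat.eq_zero_or_pos j with h0 | h0
    · subst h0
      rw [zero_mk]
      exact loop_mem
    · have h1 := chain_mem (m := m) (m + 2) le_rfl j h
      have h2 : agen m ⟨m + 2, by omega⟩ ∈ Subsemigroup.closure (genU m) :=
        Subsemigroup.subset_closure (agen_mem_genU _)
      rw [agen_last] at h2
      have h3 := Subsemigroup.mul_mem _ h1 h2
      rw [nSupp_mul_nSupp, mul_one (cyc m)] at h3
      exact h3
  · have hj2 : j = m + 2 := by omega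
    subst hj2
    have h2 : agen m ⟨m + 2, by omega⟩ ∈ Subsemigroup.closure (genU m) :=
      Subsemigroup.subset_closure (agen_mem_genU _)
    rw [agen_last] at h2
    exact h2

lemma from0_mem (q : Fin (m+3)) (σ : Perm (Fin (m+3))) :
    nSuppMap (m+3) 0 q σ ∈ Subsemigroup.closure (genU m) := by
  rcases q with ⟨k, hk⟩
  rcases Nat.eq_zero_or_pos k with h0 | h0
  · subst h0
    rw [zero_mk]
    exact nSupp00_mem σ
  · have h1 := nSupp00_mem (m := m) σ
    have h2 := chain_mem (m := m) k (by omega) 0 h0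
    rw [zero_mk] at h2
    have h3 := Subsemigroup.mul_mem _ h1 h2
    rw [nSupp_mul_nSupp, one_mul σ] at h3
    exact h3

lemma nSupp_all_mem (p q : Fin (m+3)) (σ : Perm (Fin (m+3))) :
    nSuppMap (m+3) p q σ ∈ Subsemigroup.closure (genU m) := by
  have h1 := to0_mem (m := m) p
  have h2 := from0_mem (m := m) q (σ * (cyc m)⁻¹)
  have h3 := Subsemigroup.mul_mem _ h1 h2
  rw [nSupp_mul_nSupp] at h3
  have h4 : (σ * (cyc m)⁻¹) * cyc m = σ := by
    rw [mul_assoc, inv_mul_cancel, mul_one]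
  rwa [h4] at h3

lemma sgl_all_mem (k l p q : Fin (m+3)) :
    sglMap (m+3) k l p q ∈ Subsemigroup.closure (genU m) := by
  have h1 := nSupp_all_mem (m := m) l 0 (Equiv.swap 0 k)
  have h2 : sglMap (m+3) 0 0 0 0 ∈ Subsemigroup.closure (genU m) :=
    Subsemigroup.subset_closure s0_mem_genU
  have h3 := Subsemigroup.mul_mem _ h1 h2
  rw [nSupp_mul_sgl, Equiv.swap_inv, Equiv.swap_apply_left] at h3
  have h4 := nSupp_all_mem (m := m) 0 q (Equiv.swap 0 p)
  have h5 := Subsemigroup.mul_mem _ h3 h4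
  rw [sgl_mul_nSupp, Equiv.swap_apply_left] at h5
  exact h5

lemma const_all_mem (c : Bn (m+3)) :
    constMap (m+3) c ∈ Subsemigroup.closure (genU m) := by
  have hc0 : constMap (m+3) (some (0, 0)) ∈ Subsemigroup.closure (genU m) :=
    Subsemigroup.subset_closure c0_mem_genU
  rcases c with _ | ⟨p, q⟩
  · have h1 := nSupp_all_mem (m := m) 1 1 1
    have h2 := Subsemigroup.mul_mem _ hc0 h1
    erw [const_mul] at h2
    have h3 : nSuppMap (m+3) 1 1 1 (some (0, 0)) = none := by
      rw [nSupp_some, if_neg fin01]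
    rwa [h3] at h2
  · have h1 := sgl_all_mem (m := m) 0 0 p q
    have h2 := Subsemigroup.mul_mem _ hc0 h1
    erw [const_mul] at h2
    have h3 : sglMap (m+3) 0 0 p q (some (0, 0)) = some (p, q) := by
      erw [sgl_apply', if_pos rfl]
    rwa [h3] at h2

lemma genU_closure : (Subsemigroup.closure (genU m) : Set (MapBn (m+3))) = APlus (m+3) := by
  apply Set.Subset.antisymm
  · exact closure_subset_APlus genU_subset
  · rintro f (⟨c, rfl⟩ | ⟨p, q, σ, rfl⟩ | ⟨k, l, p, q, rfl⟩)
    · exact const_all_mem c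
    · exact nSupp_all_mem p q σ
    · exact sgl_all_mem k l p q

lemma agen_inj : Function.Injective (agen m) := by
  intro i j h
  unfold agen at h
  exact (nSupp_inj h).1

lemma genU_ncard : (genU m).ncard = m + 6 := by
  have h1 : (Set.range (agen m)).ncard = m + 3 := by
    rw [← Set.image_univ, Set.ncard_image_of_injective _ agen_inj, Set.ncard_univ,
      Nat.card_eq_fintype_card, Fintype.card_fin]
  have hb : nSuppMap (m+3) 0 0 (Equiv.swap 0 1) ∉ Set.range (agen m) := by
    rintro ⟨i, hi⟩
    unfold agen at hi
    obtain ⟨h1', h2', -⟩ := nSupp_inj hi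
    subst h1'
    rw [zero_add] at h2'
    exact fin01 h2'.symm
  have hs : sglMap (m+3) 0 0 0 0 ∉
      insert (nSuppMap (m+3) 0 0 (Equiv.swap 0 1)) (Set.range (agen m)) := by
    rintro (h | ⟨i, hi⟩)
    · exact nSupp_ne_sgl _ _ _ _ _ _ _ h.symm
    · unfold agen at hi
      exact nSupp_ne_sgl _ _ _ _ _ _ _ hi
  have hc : constMap (m+3) (some (0, 0)) ∉
      insert (sglMap (m+3) 0 0 0 0)
        (insert (nSuppMap (m+3) 0 0 (Equiv.swap 0 1)) (Set.range (agen m))) := by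
    rintro (h | h | ⟨i, hi⟩)
    · exact const_ne_sgl _ _ _ _ _ h
    · exact const_ne_nSupp _ _ _ _ h
    · unfold agen at hi
      exact const_ne_nSupp _ _ _ _ hi.symm
  rw [genU, Set.ncard_insert_of_notMem hc, Set.ncard_insert_of_notMem hs,
    Set.ncard_insert_of_notMem hb, h1]

end APlusPf
theorem lower_rank_APlus (n : ℕ) (hn : 3 ≤ n) :
    sInf {k | ∃ U : Set (MapBn n), U ⊆ APlus n ∧ U.ncard = k ∧
      (Subsemigroup.closure U : Set (MapBn n)) = APlus n} = n + 3 := by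
  obtain ⟨m, rfl⟩ : ∃ m, n = m + 3 := ⟨n - 3, by omega⟩
  apply le_antisymm
  · apply Nat.sInf_le
    exact ⟨APlusPf.genU m, APlusPf.genU_subset,
      by rw [APlusPf.genU_ncard], APlusPf.genU_closure⟩
  · apply le_csInf
    · exact ⟨(APlusPf.genU m).ncard, APlusPf.genU m, APlusPf.genU_subset, rfl,
        APlusPf.genU_closure⟩
    · rintro k ⟨U, hU, hk, hcl⟩
      have := APlusPf.lower_bound hU hcl
      omega
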